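/- Let p in ℝ[x_1,...,x_n] be a polynomial of total degree d, and let its homogenization be the polynomial p̃ in ℝ[x_0, x_1, ..., x_n] defined by p̃ = Σ_α c_α · x_0^(d - |α|) · x^α, where the sum is over the exponent vectors α of monomials of p, c_α is the coefficient of x^α in p, and |α| is the total degree of α (equivalently p̃ = x_0^d · p(x_1/x_0, ..., x_n/x_0)). Then: (i) p is nonnegative on ℝ^n if and only if p̃ is nonnegative on ℝ^(n+1); and (ii) p is a sum of squares of polynomials if and only if p̃ is a sum of squares of polynomials. -/

import Mathlib

open MvPolynomial

/-- The homogenization `p̃ = Σ_α c_α · x₀^(d - |α|) · x^α` of a polynomial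
`p ∈ ℝ[x₁,…,xₙ]` with respect to a new variable `x₀` (indexed by `0 : Fin (n+1)`,
the original variables being embedded via `Fin.succ`). -/
noncomputable def homogenization {n : ℕ} (d : ℕ) (p : MvPolynomial (Fin n) ℝ) :
    MvPolynomial (Fin (n + 1)) ℝ :=
  ∑ α ∈ p.support,
    C (coeff α p) * (X 0) ^ (d - α.sum fun _ e => e) * rename Fin.succ (monomial α 1)

namespace HomogAux
variable {n : ℕ}

/-- substitute `x₀ := 1`. -/
noncomputable def dehom (n : ℕ) : MvPolynomial (Fin (n+1)) ℝ →+* MvPolynomial (Fin n) ℝ :=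
  eval₂Hom C (Fin.cases 1 X)

lemma dehom_homogenization (d : ℕ) (p : MvPolynomial (Fin n) ℝ) :
    dehom n (homogenization d p) = p := by
  unfold homogenization dehom
  rw [map_sum]
  conv_rhs => rw [p.as_sum]
  refine Finset.sum_congr rfl fun α hα => ?_
  rw [map_mul, map_mul, map_pow]
  have h1 : eval₂Hom (C : ℝ →+* MvPolynomial (Fin n) ℝ) (Fin.cases 1 X)
      (rename Fin.succ (monomial α (1:ℝ))) = monomial α 1 := by
    show eval₂ _ _ _ = _
    rw [eval₂_rename]
    have : (Fin.cases 1 X ∘ Fin.succ : Fin n → MvPolynomial (Fin n) ℝ) = X := by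
      funext i; simp
    rw [this, eval₂_eta]
  rw [h1]
  simp [C_mul_monomial]


lemma leadingCoeff_nonneg_of_nonneg {f : Polynomial ℝ} (h : ∀ t, 0 ≤ f.eval t) :
    0 ≤ f.leadingCoeff := by
  by_contra hlt
  push_neg at hlt
  rcases le_or_gt f.degree 0 with hd | hd
  · have : f = Polynomial.C (f.coeff 0) := Polynomial.eq_C_of_degree_le_zero hd
    have h0 := h 0
    rw [this] at h0 hlt
    simp [Polynomial.leadingCoeff] at h0 hlt
    exact absurd h0 (not_le.mpr hlt)
  · have := Polynomial.tendsto_atBot_of_leadingCoeff_nonpos f hd hlt.le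
    obtain ⟨x, hx⟩ := (this.eventually (Filter.eventually_lt_atBot (0:ℝ))).exists
    exact absurd (h x) (not_le.mpr hx)

/-- The univariate polynomial `t ↦ p (t • v)`. -/
noncomputable def F (p : MvPolynomial (Fin n) ℝ) (v : Fin n → ℝ) : Polynomial ℝ :=
  aeval (fun i => Polynomial.C (v i) * Polynomial.X) p

lemma F_eval (p : MvPolynomial (Fin n) ℝ) (v : Fin n → ℝ) (t : ℝ) :
    (F p v).eval t = eval (fun i => t * v i) p := by
  induction p using MvPolynomial.induction_on with
  | C a => simp [F]
  | add p q hp hq => simp [F, map_add] at hp hq ⊢; rw [hp, hq]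
  | mul_X p i hp => simp [F, map_mul] at hp ⊢; rw [hp]; ring

lemma F_coeff (p : MvPolynomial (Fin n) ℝ) (v : Fin n → ℝ) (k : ℕ) :
    (F p v).coeff k = eval v (homogeneousComponent k p) := by
  induction p using MvPolynomial.induction_on' with
  | add p q hp hq => simp [F, map_add] at hp hq ⊢; rw [hp, hq]
  | monomial α c =>
    have hF : F (monomial α c) v
        = Polynomial.C (c * α.prod fun i e => v i ^ e) * Polynomial.X ^ α.degree := by
      rw [F, aeval_monomial]
      simp only [Finsupp.prod, mul_pow, ← Polynomial.C_pow, Finset.prod_mul_distrib,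
        ← map_prod, Finsupp.degree, Finset.prod_pow_eq_pow_sum, Polynomial.algebraMap_eq,
        ]
      rw [map_mul]; ring_nf; rfl
    rw [hF]
    rcases eq_or_ne α.degree k with h | h
    · have hhc : homogeneousComponent k (monomial α c) = monomial α c := by
        rw [← h]
        ext γ
        rw [coeff_homogeneousComponent, coeff_monomial]
        rcases eq_or_ne α γ with rfl | hne
        · simp
        · simp [hne]
      rw [hhc, h, Polynomial.coeff_C_mul, Polynomial.coeff_X_pow, if_pos rfl, eval_monomial,
        mul_one]
    · have hhc : homogeneousComponent k (monomial α c) = 0 := by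
        apply homogeneousComponent_eq_zero'
        intro γ hγ
        have := support_monomial_subset hγ
        rw [Finset.mem_singleton] at this
        subst this; exact h
      rw [hhc, Polynomial.coeff_C_mul, Polynomial.coeff_X_pow, if_neg (fun hh => h hh.symm)]
      simp


@[simp] lemma hom_zero (d : ℕ) : homogenization d (0 : MvPolynomial (Fin n) ℝ) = 0 := by
  simp [homogenization]

lemma hom_eq_sum_subset (d : ℕ) (p : MvPolynomial (Fin n) ℝ) {S : Finset (Fin n →₀ ℕ)}
    (hS : p.support ⊆ S) :
    homogenization d p = ∑ α ∈ S,
      C (coeff α p) * (X 0) ^ (d - α.sum fun _ e => e) * rename Fin.succ (monomial α 1) := by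
  refine Finset.sum_subset hS fun α _ hα => ?_
  rw [notMem_support_iff.mp hα]
  simp

lemma hom_add (d : ℕ) (a b : MvPolynomial (Fin n) ℝ) :
    homogenization d (a + b) = homogenization d a + homogenization d b := by
  classical
  rw [hom_eq_sum_subset d (a+b) (support_add), hom_eq_sum_subset d a
    (Finset.subset_union_left (s₂ := b.support)), hom_eq_sum_subset d b
    (Finset.subset_union_right (s₁ := a.support)), ← Finset.sum_add_distrib]
  refine Finset.sum_congr rfl fun α _ => ?_
  rw [coeff_add, map_add]
  ring

lemma hom_sum (d : ℕ) {ι : Type*} (s : Finset ι) (f : ι → MvPolynomial (Fin n) ℝ) :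
    homogenization d (∑ i ∈ s, f i) = ∑ i ∈ s, homogenization d (f i) := by
  classical
  induction s using Finset.induction_on with
  | empty => simp
  | insert _ _ h ih => rw [Finset.sum_insert h, Finset.sum_insert h, hom_add, ih]

lemma hom_monomial (d : ℕ) (α : Fin n →₀ ℕ) (c : ℝ) :
    homogenization d (monomial α c)
      = C c * (X 0) ^ (d - α.sum fun _ e => e) * rename Fin.succ (monomial α 1) := by
  rcases eq_or_ne c 0 with rfl | hc
  · simp
  · rw [homogenization, support_monomial, if_neg hc, Finset.sum_singleton, coeff_monomial,
      if_pos rfl]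

lemma hom_mul {a b : MvPolynomial (Fin n) ℝ} {d e : ℕ} (ha : a.totalDegree ≤ d)
    (hb : b.totalDegree ≤ e) :
    homogenization (d + e) (a * b) = homogenization d a * homogenization e b := by
  conv_lhs => rw [a.as_sum, b.as_sum, Finset.sum_mul_sum]
  rw [hom_sum]
  have key : ∀ α ∈ a.support, ∀ β ∈ b.support,
      homogenization (d + e) (monomial α (coeff α a) * monomial β (coeff β b))
        = homogenization d (monomial α (coeff α a)) * homogenization e (monomial β (coeff β b)) := by
    intro α hα β hβ
    have hαd : (α.sum fun _ e => e) ≤ d := (le_totalDegree hα).trans ha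
    have hβe : (β.sum fun _ e => e) ≤ e := (le_totalDegree hβ).trans hb
    rw [monomial_mul, hom_monomial, hom_monomial, hom_monomial]
    have hsum : ((α + β).sum fun _ e => e) = (α.sum fun _ e => e) + (β.sum fun _ e => e) :=
      Finsupp.sum_add_index' (fun _ => rfl) (fun _ _ _ => rfl)
    have hpow : (X (0 : Fin (n+1)) : MvPolynomial (Fin (n+1)) ℝ)
        ^ ((d + e) - (α + β).sum fun _ e => e)
        = (X 0) ^ (d - α.sum fun _ e => e) * (X 0) ^ (e - β.sum fun _ e => e) := by
      rw [← pow_add, hsum]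
      congr 1
      omega
    have hmono : (rename Fin.succ (monomial (α + β) (1:ℝ)))
        = rename Fin.succ (monomial α 1) * rename Fin.succ (monomial β 1) := by
      rw [← map_mul, monomial_mul, one_mul]
    rw [hpow, hmono, map_mul]
    ring
  rw [show (∑ i ∈ a.support, homogenization (d + e)
      (∑ j ∈ b.support, monomial i (coeff i a) * monomial j (coeff j b)))
      = ∑ i ∈ a.support, ∑ j ∈ b.support,
          homogenization (d + e) (monomial i (coeff i a) * monomial j (coeff j b))
    from Finset.sum_congr rfl fun i _ => hom_sum _ _ _]
  rw [show (∑ i ∈ a.support, ∑ j ∈ b.support,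
          homogenization (d + e) (monomial i (coeff i a) * monomial j (coeff j b)))
      = ∑ i ∈ a.support, ∑ j ∈ b.support,
          homogenization d (monomial i (coeff i a)) * homogenization e (monomial j (coeff j b))
    from Finset.sum_congr rfl fun i hi => Finset.sum_congr rfl fun j hj => key i hi j hj]
  rw [← Finset.sum_mul_sum]
  conv_rhs => rw [a.as_sum, b.as_sum, hom_sum, hom_sum]


lemma eval_hom_cons {p : MvPolynomial (Fin n) ℝ} {d : ℕ}
    (hd : ∀ α ∈ p.support, (α.sum fun _ e => e) ≤ d) (t : ℝ) (v : Fin n → ℝ) :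
    eval (Fin.cons t (fun i => t * v i)) (homogenization d p) = t ^ d * eval v p := by
  rw [homogenization, map_sum]
  conv_rhs => rw [p.as_sum, map_sum, Finset.mul_sum]
  refine Finset.sum_congr rfl fun α hα => ?_
  rw [map_mul, map_mul, map_pow, eval_X, eval_rename]
  have hc : (Fin.cons t (fun i => t * v i) ∘ Fin.succ) = fun i => t * v i := by
    funext i; simp
  rw [hc, eval_monomial, eval_monomial, Fin.cons_zero]
  have hprod : (α.prod fun i e => (t * v i) ^ e)
      = t ^ (α.sum fun _ e => e) * α.prod fun i e => (v i) ^ e := by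
    rw [Finsupp.prod, Finsupp.prod, Finsupp.sum, ← Finset.prod_pow_eq_pow_sum,
      ← Finset.prod_mul_distrib]
    exact Finset.prod_congr rfl fun i _ => mul_pow _ _ _
  rw [hprod, eval_C]
  have : t ^ (d - α.sum fun _ e => e) * t ^ (α.sum fun _ e => e) = t ^ d :=
    pow_sub_mul_pow t (hd α hα)
  rw [one_mul, mul_assoc, ← mul_assoc (t ^ _), this]
  ring

lemma eval_hom_zero {p : MvPolynomial (Fin n) ℝ} {d : ℕ}
    (hd : ∀ α ∈ p.support, (α.sum fun _ e => e) ≤ d) {w : Fin (n+1) → ℝ} (hw : w 0 = 0) :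
    eval w (homogenization d p) = eval (w ∘ Fin.succ) (homogeneousComponent d p) := by
  classical
  rw [homogenization, map_sum, homogeneousComponent_apply, map_sum, Finset.sum_filter]
  refine Finset.sum_congr rfl fun α hα => ?_
  rw [map_mul, map_mul, map_pow, eval_X, hw, eval_C, eval_rename]
  have hdeg : α.degree = α.sum fun _ e => e := rfl
  rcases eq_or_ne (α.sum fun _ e => e) d with h | h
  · rw [if_pos (by rw [hdeg, h]), h, Nat.sub_self, pow_zero, eval_monomial, eval_monomial]
    ring
  · have hle := hd α hα
    rw [if_neg (by rw [hdeg]; exact h), zero_pow (by omega)]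
    ring

lemma eval_neg_of_homogeneous {d : ℕ} {P : MvPolynomial (Fin n) ℝ} (hP : P.IsHomogeneous d)
    (v : Fin n → ℝ) :
    eval (fun i => - v i) P = (-1 : ℝ) ^ d * eval v P := by
  conv_lhs => rw [P.as_sum, map_sum]
  conv_rhs => rw [P.as_sum, map_sum, Finset.mul_sum]
  refine Finset.sum_congr rfl fun γ hγ => ?_
  rw [eval_monomial, eval_monomial]
  have hdeg : (γ.sum fun _ e => e) = d := by
    have := hP (mem_support_iff.mp hγ)
    simpa [Finsupp.weight_apply, Finsupp.sum] using this
  have : (γ.prod fun i e => (- v i) ^ e)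
      = (-1 : ℝ) ^ d * γ.prod fun i e => (v i) ^ e := by
    rw [← hdeg, Finsupp.prod, Finsupp.prod, Finsupp.sum, ← Finset.prod_pow_eq_pow_sum,
      ← Finset.prod_mul_distrib]
    refine Finset.prod_congr rfl fun i _ => ?_
    rw [← neg_one_mul (v i), mul_pow]
  rw [this]
  ring

lemma hc_totalDegree_ne_zero {p : MvPolynomial (Fin n) ℝ} (hp : p ≠ 0) :
    homogeneousComponent p.totalDegree p ≠ 0 := by
  obtain ⟨α, hα, hdeg⟩ := Finset.exists_mem_eq_sup p.support
    (support_nonempty.mpr hp) (fun s => s.sum fun _ e => e)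
  intro h0
  have := coeff_homogeneousComponent (φ := p) p.totalDegree α
  rw [h0, if_pos (show α.degree = p.totalDegree from hdeg.symm)] at this
  exact mem_support_iff.mp hα this.symm

lemma exists_eval_ne {P : MvPolynomial (Fin n) ℝ} (hP : P ≠ 0) : ∃ v, eval v P ≠ 0 := by
  by_contra h
  push_neg at h
  exact hP (MvPolynomial.funext fun v => by rw [h v, map_zero])

lemma F_natDegree_le {p : MvPolynomial (Fin n) ℝ} {m : ℕ} (hm : p.totalDegree ≤ m)
    (v : Fin n → ℝ) : (F p v).natDegree ≤ m := by
  rw [Polynomial.natDegree_le_iff_coeff_eq_zero]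
  intro k hk
  rw [F_coeff, homogeneousComponent_eq_zero k p (lt_of_le_of_lt hm hk), map_zero]

lemma eval_hc_nonneg {p : MvPolynomial (Fin n) ℝ} (hp : ∀ v, 0 ≤ eval v p) (v : Fin n → ℝ) :
    0 ≤ eval v (homogeneousComponent p.totalDegree p) := by
  set d := p.totalDegree with hd
  rcases eq_or_ne (eval v (homogeneousComponent d p)) 0 with h | h
  · rw [h]
  · set f := F p v with hf
    have hcoeff : f.coeff d ≠ 0 := by rw [hf, F_coeff]; exact h
    have hnd : f.natDegree = d :=
      le_antisymm (F_natDegree_le le_rfl v) (Polynomial.le_natDegree_of_ne_zero hcoeff)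
    have hlead : f.leadingCoeff = eval v (homogeneousComponent d p) := by
      rw [Polynomial.leadingCoeff, hnd, hf, F_coeff]
    rw [← hlead]
    exact leadingCoeff_nonneg_of_nonneg fun t => by rw [F_eval]; exact hp _
  
lemma even_totalDegree {p : MvPolynomial (Fin n) ℝ} (hp0 : p ≠ 0)
    (hp : ∀ v, 0 ≤ eval v p) : Even p.totalDegree := by
  by_contra hodd
  rw [Nat.not_even_iff_odd] at hodd
  apply hc_totalDegree_ne_zero hp0
  have hz : ∀ v, eval v (homogeneousComponent p.totalDegree p) = 0 := by
    intro v
    have h1 := eval_hc_nonneg hp v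
    have h2 := eval_hc_nonneg hp (fun i => - v i)
    rw [eval_neg_of_homogeneous (homogeneousComponent_isHomogeneous _ p) v,
      hodd.neg_one_pow] at h2
    nlinarith
  exact MvPolynomial.funext fun v => by rw [hz v, map_zero]

lemma totalDegree_eq_of_sq_sum {k : ℕ} {q : Fin k → MvPolynomial (Fin n) ℝ}
    {p : MvPolynomial (Fin n) ℝ} (hk : p = ∑ i, (q i) ^ 2) (hp : p ≠ 0) :
    p.totalDegree = 2 * Finset.univ.sup fun i => (q i).totalDegree := by
  classical
  set m := Finset.univ.sup fun i => (q i).totalDegree with hm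
  have hne : (Finset.univ : Finset (Fin k)).Nonempty := by
    rcases Nat.eq_zero_or_pos k with rfl | hk0
    · exact absurd (by simpa using hk) hp
    · exact ⟨⟨0, hk0⟩, Finset.mem_univ _⟩
  have hle : p.totalDegree ≤ 2 * m := by
    rw [hk]
    refine (totalDegree_finset_sum _ _).trans (Finset.sup_le fun i _ => ?_)
    exact (totalDegree_pow _ _).trans (by
      have : (q i).totalDegree ≤ m :=
        Finset.le_sup (f := fun i => (q i).totalDegree) (Finset.mem_univ i)
      omega)
  refine le_antisymm hle ?_
  rcases Nat.eq_zero_or_pos m with hm0 | hmpos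
  · omega
  obtain ⟨i₀, _, hi₀⟩ := Finset.exists_mem_eq_sup Finset.univ hne
    fun i => (q i).totalDegree
  rw [← hm] at hi₀
  have hg0 : q i₀ ≠ 0 := fun h => by rw [h] at hi₀; simp [totalDegree_zero] at hi₀; omega
  have hhc : homogeneousComponent m (q i₀) ≠ 0 := by
    rw [hi₀]; exact hc_totalDegree_ne_zero hg0
  obtain ⟨v, hv⟩ := exists_eval_ne hhc
  -- coefficient of 2m in F p v is a sum of squares, positive at i₀
  have hFsum : F p v = ∑ i, (F (q i) v) ^ 2 := by
    rw [hk, F, map_sum]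
    exact Finset.sum_congr rfl fun i _ => map_pow _ _ _
  have hcoeff : (F p v).coeff (2 * m) = ∑ i, ((F (q i) v).coeff m) ^ 2 := by
    rw [hFsum, Polynomial.finset_sum_coeff]
    refine Finset.sum_congr rfl fun i _ => ?_
    have hdi : (F (q i) v).natDegree ≤ m :=
      F_natDegree_le ((Finset.le_sup (f := fun i => (q i).totalDegree)
        (Finset.mem_univ i)).trans_eq hm.symm) v
    rw [sq, sq, two_mul, Polynomial.coeff_mul_add_eq_of_natDegree_le hdi hdi]
  have hpos : 0 < (F p v).coeff (2 * m) := by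
    rw [hcoeff]
    refine Finset.sum_pos' (fun i _ => sq_nonneg _) ⟨i₀, Finset.mem_univ _, ?_⟩
    have h : (F (q i₀) v).coeff m = eval v (homogeneousComponent m (q i₀)) := F_coeff _ _ _
    rw [h]
    positivity
  -- conclude 2m ≤ totalDegree p
  have hhc2 : homogeneousComponent (2 * m) p ≠ 0 := by
    intro h0
    rw [F_coeff, h0, map_zero] at hpos
    exact lt_irrefl 0 hpos
  obtain ⟨γ, hγ⟩ := MvPolynomial.ne_zero_iff.mp hhc2
  have hγ' := hγ
  rw [coeff_homogeneousComponent] at hγ'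
  by_cases hdd : γ.degree = 2 * m
  · rw [if_pos hdd] at hγ'
    have : (γ.sum fun _ e => e) ≤ p.totalDegree :=
      le_totalDegree (mem_support_iff.mpr hγ')
    have hdeg : γ.degree = γ.sum fun _ e => e := rfl
    omega
  · rw [if_neg hdd] at hγ'; exact absurd rfl hγ'


end HomogAux

open HomogAux in
/-- With `d` the total degree of `p`: (i) `p` is nonnegative on `ℝⁿ` iff its
homogenization `p̃` is nonnegative on `ℝ^(n+1)`; (ii) `p` is a sum of squares iff `p̃`
is a sum of squares. -/
theorem homogenization_nonneg_iff_and_sos_iff {n : ℕ} (p : MvPolynomial (Fin n) ℝ) :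
    ((∀ v : Fin n → ℝ, 0 ≤ eval v p) ↔
      ∀ w : Fin (n + 1) → ℝ, 0 ≤ eval w (homogenization p.totalDegree p)) ∧
    ((∃ (k : ℕ) (q : Fin k → MvPolynomial (Fin n) ℝ), p = ∑ i, (q i) ^ 2) ↔
      ∃ (k : ℕ) (q : Fin k → MvPolynomial (Fin (n + 1)) ℝ),
        homogenization p.totalDegree p = ∑ i, (q i) ^ 2) := by
  constructor
  · constructor
    · intro hp w
      by_cases hp0 : p = 0
      · rw [hp0]; simp
      · have heven := even_totalDegree hp0 hp
        by_cases hw : w 0 = 0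
        · rw [eval_hom_zero (fun α hα => le_totalDegree hα) hw]
          exact eval_hc_nonneg hp _
        · have hwe : w = Fin.cons (w 0) (fun i => w 0 * (w i.succ / w 0)) := by
            funext j
            refine Fin.cases ?_ (fun i => ?_) j
            · rw [Fin.cons_zero]
            · rw [Fin.cons_succ]; field_simp
          rw [hwe, eval_hom_cons (fun α hα => le_totalDegree hα)]
          exact mul_nonneg (heven.pow_nonneg _) (hp _)
    · intro hH v
      have h := hH (Fin.cons 1 (fun i => 1 * v i))
      rw [eval_hom_cons (fun α hα => le_totalDegree hα) 1 v] at h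
      simpa using h
  · constructor
    · rintro ⟨k, q, hk⟩
      by_cases hp0 : p = 0
      · exact ⟨0, Fin.elim0, by rw [hp0]; simp⟩
      · have hd : p.totalDegree = 2 * Finset.univ.sup fun i => (q i).totalDegree :=
          totalDegree_eq_of_sq_sum hk hp0
        set m := Finset.univ.sup fun i => (q i).totalDegree with hm
        refine ⟨k, fun i => homogenization m (q i), ?_⟩
        calc homogenization p.totalDegree p
            = homogenization (m + m) (∑ i, (q i) ^ 2) := by rw [hd, two_mul, ← hk]
          _ = ∑ i, homogenization (m + m) ((q i) ^ 2) := hom_sum _ _ _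
          _ = ∑ i, (homogenization m (q i)) ^ 2 := by
              refine Finset.sum_congr rfl fun i _ => ?_
              have hle : (q i).totalDegree ≤ m :=
                Finset.le_sup (f := fun i => (q i).totalDegree) (Finset.mem_univ i)
              rw [sq, hom_mul hle hle, ← sq]
    · rintro ⟨k, s, hs⟩
      refine ⟨k, fun i => dehom n (s i), ?_⟩
      rw [← dehom_homogenization p.totalDegree p, hs, map_sum]
      exact Finset.sum_congr rfl fun i _ => map_pow _ _ _
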